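/- Let Ω and Δ be finite nonempty sets and let G be a cyclic subgroup of Perm Ω × Perm Δ whose product action on Ω × Δ (given by (x,y) • (u,w) = (x u, y w)) is transitive. Then there exist a cyclic subgroup H of Perm Ω regular on Ω and a cyclic subgroup K of Perm Δ regular on Δ such that G = H × K (G equals the product subgroup {(h,k) : h ∈ H, k ∈ K}). In particular, the cardinalities of Ω and Δ are coprime. -/

import Mathlib

/-- A permutation `e` is an automorphism of the digraph with adjacency `Adj`. -/
def IsDigraphAut {V : Type*} (Adj : V → V → Prop) (e : Equiv.Perm V) : Prop :=
  ∀ x y, Adj x y ↔ Adj (e x) (e y)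

/-- The automorphism group of a digraph, as a subgroup of the permutation group. -/
def autGroup {V : Type*} (Adj : V → V → Prop) : Subgroup (Equiv.Perm V) where
  carrier := {e | IsDigraphAut Adj e}
  one_mem' := by intro x y; exact Iff.rfl
  mul_mem' := by
    intro a b ha hb x y
    exact (hb x y).trans (ha (b x) (b y))
  inv_mem' := by
    intro a ha x y
    simpa using (ha (a⁻¹ x) (a⁻¹ y)).symm

/-- A digraph is arc-transitive if its automorphism group is transitive on arcs. -/
def ArcTransitive {V : Type*} (Adj : V → V → Prop) : Prop :=
  ∀ x y u v, Adj x y → Adj u v → ∃ e ∈ autGroup Adj, e x = u ∧ e y = v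

/-- A subgroup of the permutation group of `V` is regular on `V`. -/
def IsRegularSub {V : Type*} (H : Subgroup (Equiv.Perm V)) : Prop :=
  ∀ u v : V, ∃! h : H, (h : Equiv.Perm V) u = v

/-- A circulant: the automorphism group contains a regular cyclic subgroup. -/
def IsCirculant {V : Type*} (Adj : V → V → Prop) : Prop :=
  ∃ H : Subgroup (Equiv.Perm V), H ≤ autGroup Adj ∧ IsCyclic H ∧ IsRegularSub H

/-- A normal circulant: the automorphism group contains a regular cyclic subgroup
that is normal in the automorphism group. -/
def IsNormalCirculant {V : Type*} (Adj : V → V → Prop) : Prop :=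
  ∃ H : Subgroup (Equiv.Perm V), H ≤ autGroup Adj ∧ IsCyclic H ∧ IsRegularSub H ∧
    ∀ e ∈ autGroup Adj, ∀ h ∈ H, e * h * e⁻¹ ∈ H

/-- Tensor (direct) product of digraphs. -/
def tensorAdj {V₁ V₂ : Type*} (Adj₁ : V₁ → V₁ → Prop) (Adj₂ : V₂ → V₂ → Prop) :
    V₁ × V₂ → V₁ × V₂ → Prop :=
  fun p q => Adj₁ p.1 q.1 ∧ Adj₂ p.2 q.2

/-- Lexicographic product `Γ[Kbar_b]` with the edgeless digraph on `b` vertices. -/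
def lexAdj {V : Type*} (Adj : V → V → Prop) (b : ℕ) : V × Fin b → V × Fin b → Prop :=
  fun p q => Adj p.1 q.1

/-- Digraph isomorphism. -/
def DigraphIso {V₁ V₂ : Type*} (Adj₁ : V₁ → V₁ → Prop) (Adj₂ : V₂ → V₂ → Prop) : Prop :=
  ∃ e : V₁ ≃ V₂, ∀ x y, Adj₁ x y ↔ Adj₂ (e x) (e y)

/-- Connectedness: the reflexive–symmetric–transitive closure of adjacency
relates every pair of vertices. -/
def DigraphConnected {V : Type*} (Adj : V → V → Prop) : Prop :=
  ∀ u v : V, Relation.ReflTransGen (fun a b => Adj a b ∨ Adj b a) u v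

/-- R-thick digraph: two distinct vertices with the same in- and out-neighbourhoods. -/
def RThick {V : Type*} (Adj : V → V → Prop) : Prop :=
  ∃ u v : V, u ≠ v ∧ (∀ w, Adj u w ↔ Adj v w) ∧ (∀ w, Adj w u ↔ Adj w v)

/-- The directed 4-cycle on `ZMod 4`. -/
def C4Adj : ZMod 4 → ZMod 4 → Prop := fun x y => y - x = 1 ∨ y - x = 3

/-- Cayley digraph of a group `G` with connection set `S`. -/
def cayAdj (G : Type*) [Group G] (S : Set G) : G → G → Prop :=
  fun x y => y * x⁻¹ ∈ S

/-- The right-regular representation of `G` inside `Equiv.Perm G`. -/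
def rightReg (G : Type*) [Group G] : Subgroup (Equiv.Perm G) where
  carrier := {e | ∃ g : G, ∀ x, e x = x * g}
  one_mem' := ⟨1, by simp⟩
  mul_mem' := by
    rintro a b ⟨g, hg⟩ ⟨h, hh⟩
    exact ⟨h * g, fun x => by simp [Equiv.Perm.mul_apply, hh, hg, mul_assoc]⟩
  inv_mem' := by
    rintro a ⟨g, hg⟩
    refine ⟨g⁻¹, fun x => a.injective ?_⟩
    rw [show a (a⁻¹ x) = x from a.apply_symm_apply x, hg]
    simp

/-- Cayley digraph of `ZMod n` with connection set `S`. -/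
def zcayAdj (n : ℕ) (S : Set (ZMod n)) : ZMod n → ZMod n → Prop :=
  fun x y => y - x ∈ S

/-- The translation subgroup of `Equiv.Perm (ZMod n)`. -/
def transSub (n : ℕ) : Subgroup (Equiv.Perm (ZMod n)) where
  carrier := {e | ∃ g : ZMod n, ∀ x, e x = x + g}
  one_mem' := ⟨0, by simp⟩
  mul_mem' := by
    rintro a b ⟨g, hg⟩ ⟨h, hh⟩
    exact ⟨h + g, fun x => by simp [Equiv.Perm.mul_apply, hh, hg, add_assoc]⟩
  inv_mem' := by
    rintro a ⟨g, hg⟩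
    refine ⟨-g, fun x => a.injective ?_⟩
    rw [show a (a⁻¹ x) = x from a.apply_symm_apply x, hg]
    simp

theorem stmt11 {Ω Δ : Type*} [Fintype Ω] [Fintype Δ] [Nonempty Ω] [Nonempty Δ]
    (G : Subgroup (Equiv.Perm Ω × Equiv.Perm Δ)) (hcyc : IsCyclic G)
    (htrans : ∀ u v : Ω × Δ, ∃ g ∈ G, g.1 u.1 = v.1 ∧ g.2 u.2 = v.2) :
    (∃ (H : Subgroup (Equiv.Perm Ω)) (K : Subgroup (Equiv.Perm Δ)),
      IsCyclic H ∧ IsRegularSub H ∧ IsCyclic K ∧ IsRegularSub K ∧ G = H.prod K) ∧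
    Nat.Coprime (Fintype.card Ω) (Fintype.card Δ) := by
  classical
  inhabit Ω; inhabit Δ
  obtain ⟨σ, hσ⟩ := hcyc.exists_generator
  -- G is commutative
  have hcomm : ∀ a b : Equiv.Perm Ω × Equiv.Perm Δ, a ∈ G → b ∈ G → a * b = b * a := by
    intro a b ha hb
    obtain ⟨m, hm⟩ := hσ ⟨a, ha⟩
    obtain ⟨n, hn⟩ := hσ ⟨b, hb⟩
    have : (⟨a, ha⟩ : G) * ⟨b, hb⟩ = (⟨b, hb⟩ : G) * ⟨a, ha⟩ := by
      rw [← hm, ← hn, ← zpow_add, ← zpow_add, add_comm]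
    exact congrArg Subtype.val this
  -- an element of G whose first component fixes a point has trivial first component
  have hfix1 : ∀ g ∈ G, ∀ u : Ω, g.1 u = u → g.1 = 1 := by
    intro g hg u hu
    ext x
    obtain ⟨g', hg', h1, _⟩ := htrans (u, default) (x, default)
    have hc : g.1 (g'.1 u) = g'.1 (g.1 u) := by
      calc g.1 (g'.1 u) = (g * g').1 u := rfl
        _ = (g' * g).1 u := by rw [hcomm g g' hg hg']
        _ = g'.1 (g.1 u) := rfl
    rw [h1, hu, h1] at hc
    simpa using hc
  have hfix2 : ∀ g ∈ G, ∀ w : Δ, g.2 w = w → g.2 = 1 := by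
    intro g hg w hw
    ext x
    obtain ⟨g', hg', _, h2⟩ := htrans (default, w) (default, x)
    have hc : g.2 (g'.2 w) = g'.2 (g.2 w) := by
      calc g.2 (g'.2 w) = (g * g').2 w := rfl
        _ = (g' * g).2 w := by rw [hcomm g g' hg hg']
        _ = g'.2 (g.2 w) := rfl
    rw [h2, hw, h2] at hc
    simpa using hc
  set H : Subgroup (Equiv.Perm Ω) := G.map (MonoidHom.fst _ _) with hHdef
  set K : Subgroup (Equiv.Perm Δ) := G.map (MonoidHom.snd _ _) with hKdef
  have hcycH : IsCyclic H :=
    isCyclic_of_surjective _ ((MonoidHom.fst _ _).subgroupMap_surjective G)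
  have hcycK : IsCyclic K :=
    isCyclic_of_surjective _ ((MonoidHom.snd _ _).subgroupMap_surjective G)
  have hinjH : ∀ h₁ ∈ H, ∀ h₂ ∈ H, ∀ u : Ω, h₁ u = h₂ u → h₁ = h₂ := by
    rintro _ ⟨g₁, hg₁, rfl⟩ _ ⟨g₂, hg₂, rfl⟩ u hu
    have hm : g₂⁻¹ * g₁ ∈ G := G.mul_mem (G.inv_mem hg₂) hg₁
    simp only [MonoidHom.coe_fst] at hu
    have hfixed : (g₂⁻¹ * g₁).1 u = u := by
      show g₂.1⁻¹ (g₁.1 u) = u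
      rw [hu]; exact g₂.1.symm_apply_apply u
    have := hfix1 _ hm u hfixed
    exact (inv_mul_eq_one.mp this).symm
  have hinjK : ∀ h₁ ∈ K, ∀ h₂ ∈ K, ∀ w : Δ, h₁ w = h₂ w → h₁ = h₂ := by
    rintro _ ⟨g₁, hg₁, rfl⟩ _ ⟨g₂, hg₂, rfl⟩ w hw
    have hm : g₂⁻¹ * g₁ ∈ G := G.mul_mem (G.inv_mem hg₂) hg₁
    simp only [MonoidHom.coe_snd] at hw
    have hfixed : (g₂⁻¹ * g₁).2 w = w := by
      show g₂.2⁻¹ (g₁.2 w) = w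
      rw [hw]; exact g₂.2.symm_apply_apply w
    have := hfix2 _ hm w hfixed
    exact (inv_mul_eq_one.mp this).symm
  have hregH : IsRegularSub H := by
    intro u v
    obtain ⟨g, hg, h1, _⟩ := htrans (u, default) (v, default)
    refine ⟨⟨g.1, ⟨g, hg, rfl⟩⟩, h1, ?_⟩
    rintro ⟨h, hh⟩ hhv
    exact Subtype.ext (hinjH h hh g.1 ⟨g, hg, rfl⟩ u (hhv.trans h1.symm))
  have hregK : IsRegularSub K := by
    intro u v
    obtain ⟨g, hg, _, h2⟩ := htrans (default, u) (default, v)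
    refine ⟨⟨g.2, ⟨g, hg, rfl⟩⟩, h2, ?_⟩
    rintro ⟨h, hh⟩ hhv
    exact Subtype.ext (hinjK h hh g.2 ⟨g, hg, rfl⟩ u (hhv.trans h2.symm))
  -- cardinalities
  have hcardH : Nat.card H = Fintype.card Ω := by
    have : Function.Bijective (fun h : H => (h : Equiv.Perm Ω) (default : Ω)) := by
      constructor
      · rintro ⟨h₁, hh₁⟩ ⟨h₂, hh₂⟩ h
        exact Subtype.ext (hinjH h₁ hh₁ h₂ hh₂ default h)
      · intro v
        obtain ⟨h, hh, _⟩ := hregH default v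
        exact ⟨h, hh⟩
    rw [Nat.card_eq_of_bijective _ this, Nat.card_eq_fintype_card]
  have hcardK : Nat.card K = Fintype.card Δ := by
    have : Function.Bijective (fun h : K => (h : Equiv.Perm Δ) (default : Δ)) := by
      constructor
      · rintro ⟨h₁, hh₁⟩ ⟨h₂, hh₂⟩ h
        exact Subtype.ext (hinjK h₁ hh₁ h₂ hh₂ default h)
      · intro v
        obtain ⟨h, hh, _⟩ := hregK default v
        exact ⟨h, hh⟩
    rw [Nat.card_eq_of_bijective _ this, Nat.card_eq_fintype_card]
  have hcardG : Nat.card G = Fintype.card Ω * Fintype.card Δ := by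
    have : Function.Bijective
        (fun g : G => ((g : Equiv.Perm Ω × Equiv.Perm Δ).1 (default : Ω),
          (g : Equiv.Perm Ω × Equiv.Perm Δ).2 (default : Δ))) := by
      constructor
      · rintro ⟨g₁, hg₁⟩ ⟨g₂, hg₂⟩ h
        have h1 := congrArg Prod.fst h
        have h2 := congrArg Prod.snd h
        simp only at h1 h2
        have e1 : g₁.1 = g₂.1 := hinjH g₁.1 ⟨g₁, hg₁, rfl⟩ g₂.1 ⟨g₂, hg₂, rfl⟩ default h1
        have e2 : g₁.2 = g₂.2 := hinjK g₁.2 ⟨g₁, hg₁, rfl⟩ g₂.2 ⟨g₂, hg₂, rfl⟩ default h2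
        exact Subtype.ext (Prod.ext e1 e2)
      · rintro ⟨v, w⟩
        obtain ⟨g, hg, h1, h2⟩ := htrans (default, default) (v, w)
        exact ⟨⟨g, hg⟩, by simp [h1, h2]⟩
    rw [Nat.card_eq_of_bijective _ this, Nat.card_prod, Nat.card_eq_fintype_card,
      Nat.card_eq_fintype_card]
  -- G = H.prod K
  have hle : G ≤ H.prod K := by
    intro g hg
    exact ⟨⟨g, hg, rfl⟩, ⟨g, hg, rfl⟩⟩
  have hcardHK : Nat.card (H.prod K) = Fintype.card Ω * Fintype.card Δ := by
    rw [Nat.card_congr (H.prodEquiv K).toEquiv, Nat.card_prod, hcardH, hcardK]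
  have hGeq : G = H.prod K := by
    refine Subgroup.eq_of_le_of_card_ge hle ?_
    rw [hcardHK, hcardG]
  refine ⟨⟨H, K, hcycH, hregH, hcycK, hregK, hGeq⟩, ?_⟩
  -- coprimality
  set a := (σ : Equiv.Perm Ω × Equiv.Perm Δ).1 with ha
  set b := (σ : Equiv.Perm Ω × Equiv.Perm Δ).2 with hb
  have hoσ : orderOf (σ : Equiv.Perm Ω × Equiv.Perm Δ)
      = Fintype.card Ω * Fintype.card Δ := by
    rw [Subgroup.orderOf_coe, orderOf_eq_card_of_forall_mem_zpowers hσ, hcardG]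
  have hlcm : Nat.lcm (orderOf a) (orderOf b) = Fintype.card Ω * Fintype.card Δ := by
    rw [← Prod.orderOf]; exact hoσ
  have hda : orderOf a ∣ Fintype.card Ω := by
    rw [← hcardH]
    exact Subgroup.orderOf_dvd_natCard H ⟨σ, σ.2, rfl⟩
  have hdb : orderOf b ∣ Fintype.card Δ := by
    rw [← hcardK]
    exact Subgroup.orderOf_dvd_natCard K ⟨σ, σ.2, rfl⟩
  have hlcmdvd : Nat.lcm (orderOf a) (orderOf b) ∣
      Nat.lcm (Fintype.card Ω) (Fintype.card Δ) :=
    Nat.lcm_dvd (hda.trans (Nat.dvd_lcm_left _ _)) (hdb.trans (Nat.dvd_lcm_right _ _))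
  have hlcmeq : Nat.lcm (Fintype.card Ω) (Fintype.card Δ)
      = Fintype.card Ω * Fintype.card Δ := by
    refine Nat.dvd_antisymm (Nat.lcm_dvd ⟨_, rfl⟩ ⟨_, Nat.mul_comm _ _⟩) ?_
    rw [← hlcm]; exact hlcmdvd
  have hpos : 0 < Fintype.card Ω * Fintype.card Δ :=
    Nat.mul_pos Fintype.card_pos Fintype.card_pos
  have := Nat.gcd_mul_lcm (Fintype.card Ω) (Fintype.card Δ)
  rw [hlcmeq] at this
  unfold Nat.Coprime
  nlinarith [Nat.gcd_mul_lcm (Fintype.card Ω) (Fintype.card Δ)]
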